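/- Let k be a field, A a finite-dimensional k-algebra, and U ⊆ T two torsion classes in mod A. Then every finitely generated A-module X with X ∈ T and Hom_A(U', X) = 0 for all U' ∈ U admits a finite chain of submodules 0 = X₀ ⊆ X₁ ⊆ ⋯ ⊆ X_n = X such that each subquotient X_i/X_{i−1} is a brick lying in T and satisfying Hom_A(U', X_i/X_{i−1}) = 0 for all U' ∈ U. -/

import Mathlib

universe u

/-- A torsion class in the category `mod A` of finitely generated `A`-modules:
a class of finitely generated modules, containing the zero modules, closed under
isomorphism, images of surjective homomorphisms (factor modules) and extensions. -/
def IsTorsionClass (A : Type u) [Ring A] (T : Set (ModuleCat.{u} A)) : Prop :=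
  (∀ M ∈ T, Module.Finite A M) ∧
  (∀ M : ModuleCat.{u} A, Subsingleton M → M ∈ T) ∧
  (∀ M N : ModuleCat.{u} A, M ∈ T → Nonempty (M ≃ₗ[A] N) → N ∈ T) ∧
  (∀ (M N : ModuleCat.{u} A) (f : M →ₗ[A] N), Function.Surjective f → M ∈ T → N ∈ T) ∧
  (∀ (M : ModuleCat.{u} A) (S : Submodule A M),
     ModuleCat.of A S ∈ T → ModuleCat.of A (M ⧸ S) ∈ T → M ∈ T)

/-- The smallest torsion class containing a class `C` of modules: the intersection of
all torsion classes containing `C`. -/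
def torsGen (A : Type u) [Ring A] (C : Set (ModuleCat.{u} A)) : Set (ModuleCat.{u} A) :=
  ⋂₀ {T | IsTorsionClass A T ∧ C ⊆ T}

/-- A brick: a nonzero finitely generated module all of whose nonzero endomorphisms are
invertible. -/
def IsBrick (A : Type u) [Ring A] (S : ModuleCat.{u} A) : Prop :=
  Nontrivial S ∧ Module.Finite A S ∧ ∀ f : S →ₗ[A] S, f ≠ 0 → Function.Bijective f

section Helpers

variable {A : Type u} [Ring A]

/-- No nonzero homomorphism from any module of `U` into `M`. -/
def NoU (U : Set (ModuleCat.{u} A)) (M : Type u) [AddCommGroup M] [Module A M] : Prop :=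
  ∀ U' ∈ U, ∀ f : U' →ₗ[A] M, f = 0

lemma noU_of_injective {U : Set (ModuleCat.{u} A)} {M N : Type u} [AddCommGroup M] [Module A M]
    [AddCommGroup N] [Module A N] (f : M →ₗ[A] N) (hf : Function.Injective f)
    (h : NoU U N) : NoU U M := by
  intro U' hU' g
  have h2 : f.comp g = 0 := h U' hU' (f.comp g)
  ext x
  have := LinearMap.congr_fun h2 x
  simp only [LinearMap.comp_apply, LinearMap.zero_apply] at this
  exact hf (by simpa using this)

lemma mem_of_equiv {T : Set (ModuleCat.{u} A)} (hT : IsTorsionClass A T) {M N : Type u}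
    [AddCommGroup M] [Module A M] [AddCommGroup N] [Module A N] (e : M ≃ₗ[A] N)
    (h : ModuleCat.of A M ∈ T) : ModuleCat.of A N ∈ T :=
  hT.2.2.1 (ModuleCat.of A M) (ModuleCat.of A N) h ⟨e⟩

lemma image_mem {T : Set (ModuleCat.{u} A)} (hT : IsTorsionClass A T) {M N : Type u}
    [AddCommGroup M] [Module A M] [AddCommGroup N] [Module A N] (f : M →ₗ[A] N)
    (h : ModuleCat.of A M ∈ T) : ModuleCat.of A (LinearMap.range f) ∈ T :=
  hT.2.2.2.1 (ModuleCat.of A M) (ModuleCat.of A (LinearMap.range f)) f.rangeRestrict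
    f.surjective_rangeRestrict h

/-- The subquotient `(comap π q) / W₀` is isomorphic to `q`, when `W₀` is the kernel of `π`
and `q` is inside the range of `π`. -/
noncomputable def subquotEquiv {M N : Type u} [AddCommGroup M] [Module A M] [AddCommGroup N]
    [Module A N] (π : M →ₗ[A] N) {W₀ : Submodule A M} (hW₀ : LinearMap.ker π = W₀)
    (q : Submodule A N) (hq : q ≤ LinearMap.range π) :
    (↥(q.comap π) ⧸ Submodule.comap (q.comap π).subtype W₀) ≃ₗ[A] ↥q := by
  subst hW₀
  refine (Submodule.quotEquivOfEq _ _ ?_).trans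
    (LinearMap.quotKerEquivOfSurjective
      (LinearMap.codRestrict q (π.domRestrict (q.comap π)) fun x => by rw [LinearMap.domRestrict_apply]; exact x.2) ?_)
  · rw [LinearMap.ker_codRestrict]
    ext x
    simp [LinearMap.domRestrict_apply, LinearMap.mem_ker]
  · rintro ⟨y, hy⟩
    obtain ⟨x, hx⟩ := hq hy
    refine ⟨⟨x, by simp [Submodule.mem_comap, hx, hy]⟩, ?_⟩
    ext
    simp [hx]

noncomputable def quotComapEquiv {M N : Type u} [AddCommGroup M] [Module A M] [AddCommGroup N]
    [Module A N] (π : M →ₗ[A] N) (hπ : Function.Surjective π) (q : Submodule A N) :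
    (M ⧸ q.comap π) ≃ₗ[A] (N ⧸ q) :=
  (Submodule.quotEquivOfEq _ _ (by rw [LinearMap.ker_comp, Submodule.ker_mkQ])).trans
    ((q.mkQ.comp π).quotKerEquivOfSurjective ((q.mkQ_surjective).comp hπ))

end Helpers

section Step
variable {A : Type u} [Ring A] {T U : Set (ModuleCat.{u} A)}

/-- Every nonzero submodule of a module with no nonzero `U`-homs is nonzero. -/
lemma no_U_submodule {M : Type u} [AddCommGroup M] [Module A M] (hU : IsTorsionClass A U)
    (h : NoU U M) (p : Submodule A M) (hp : ModuleCat.of A p ∈ U) : p = ⊥ := by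
  have h0 : p.subtype = 0 := h (ModuleCat.of A p) hp p.subtype
  rw [Submodule.eq_bot_iff]
  intro x hx
  have := LinearMap.congr_fun h0 ⟨x, hx⟩
  simpa using this

lemma noU_of_no_U_submodule {M : Type u} [AddCommGroup M] [Module A M]
    (hU : IsTorsionClass A U)
    (h : ∀ p : Submodule A M, ModuleCat.of A p ∈ U → p = ⊥) : NoU U M := by
  intro U' hU' f
  have : ModuleCat.of A (LinearMap.range f) ∈ U := image_mem hU f hU'
  have h2 := h _ this
  rwa [LinearMap.range_eq_bot] at h2

/-- quotient by a maximal `U`-submodule has no `U`-submodules -/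
lemma quot_max_U {M : Type u} [AddCommGroup M] [Module A M] [IsNoetherian A M]
    (hU : IsTorsionClass A U) :
    ∃ t : Submodule A M, ModuleCat.of A t ∈ U ∧ NoU U (M ⧸ t) := by
  have wfgt : WellFounded ((· > ·) : Submodule A M → Submodule A M → Prop) := IsWellFounded.wf
  obtain ⟨t, htU, htmax⟩ := wfgt.has_min {p | ModuleCat.of A p ∈ U}
    ⟨⊥, hU.2.1 _ inferInstance⟩
  refine ⟨t, htU, noU_of_no_U_submodule hU ?_⟩
  intro p hp
  set N := p.comap t.mkQ with hN
  have htN : t ≤ N := Submodule.le_comap_mkQ t p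
  have hNU : ModuleCat.of A N ∈ U := by
    refine hU.2.2.2.2 (ModuleCat.of A N) (Submodule.comap N.subtype t) ?_ ?_
    · exact mem_of_equiv hU (Submodule.comapSubtypeEquivOfLe htN).symm htU
    · refine mem_of_equiv hU (subquotEquiv t.mkQ (Submodule.ker_mkQ t) p (by
        rw [Submodule.range_mkQ]; exact le_top)).symm hp
  have hNt : N = t := by
    by_contra hne
    exact htmax N hNU (lt_of_le_of_ne htN (Ne.symm hne))
  have : p = Submodule.map t.mkQ N := by
    rw [hN, Submodule.map_comap_eq, Submodule.range_mkQ, top_inf_eq]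
  rw [this, hNt, Submodule.mkQ_map_self]
end Step

section Step2
variable {A : Type u} [Ring A] {T U : Set (ModuleCat.{u} A)}

lemma exists_brick_quot (hT : IsTorsionClass A T) (hU : IsTorsionClass A U) (hUT : U ⊆ T)
    (M : Type u) [AddCommGroup M] [Module A M] [IsArtinian A M] [IsNoetherian A M]
    [Nontrivial M] (hMT : ModuleCat.of A M ∈ T) (hMU : NoU U M) :
    ∃ W : Submodule A M, W ≠ ⊤ ∧ ModuleCat.of A W ∈ T ∧
      IsBrick A (ModuleCat.of A (M ⧸ W)) ∧ ModuleCat.of A (M ⧸ W) ∈ T ∧ NoU U (M ⧸ W) := by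
  classical
  have wfgt : WellFounded ((· > ·) : Submodule A M → Submodule A M → Prop) := IsWellFounded.wf
  have hPbot : (⊥ : Submodule A M) ≠ ⊤ ∧ ModuleCat.of A (⊥ : Submodule A M) ∈ T ∧
      NoU U (M ⧸ (⊥ : Submodule A M)) := by
    refine ⟨bot_ne_top, hT.2.1 _ inferInstance, ?_⟩
    exact noU_of_injective (Submodule.quotEquivOfEqBot ⊥ rfl).toLinearMap
      (Submodule.quotEquivOfEqBot (⊥ : Submodule A M) rfl).injective hMU
  obtain ⟨W, hWP, hWmax⟩ := wfgt.has_min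
    {W : Submodule A M | W ≠ ⊤ ∧ ModuleCat.of A W ∈ T ∧ NoU U (M ⧸ W)} ⟨⊥, hPbot⟩
  obtain ⟨hWtop, hWT, hWU⟩ := hWP
  set π := W.mkQ with hπdef
  have hπsurj : Function.Surjective π := Submodule.mkQ_surjective W
  have hπker : LinearMap.ker π = W := Submodule.ker_mkQ W
  have hBT : ModuleCat.of A (M ⧸ W) ∈ T :=
    hT.2.2.2.1 (ModuleCat.of A M) (ModuleCat.of A (M ⧸ W)) π hπsurj hMT
  have hBnt : Nontrivial (M ⧸ W) :=
    Submodule.Quotient.nontrivial_iff.mpr hWtop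
  have hBU : NoU U (M ⧸ W) := hWU
  -- key contradiction machine
  have key : ∀ q : Submodule A (M ⧸ W), q ≠ ⊥ → q ≠ ⊤ → ModuleCat.of A q ∈ T →
      NoU U ((M ⧸ W) ⧸ q) → False := by
    intro q hq0 hqt hqT hqU
    have h1 : W < q.comap π := by
      have := Submodule.comap_strictMono_of_surjective hπsurj (bot_lt_iff_ne_bot.mpr hq0)
      rwa [Submodule.comap_bot, hπker] at this
    refine hWmax (q.comap π) ⟨?_, ?_, ?_⟩ h1
    · have hlt : q.comap π < ⊤ := by
        have := Submodule.comap_strictMono_of_surjective hπsurj (lt_top_iff_ne_top.mpr hqt)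
        rwa [Submodule.comap_top] at this
      exact hlt.ne
    · refine hT.2.2.2.2 (ModuleCat.of A (q.comap π)) (Submodule.comap (q.comap π).subtype W)
        ?_ ?_
      · exact mem_of_equiv hT (Submodule.comapSubtypeEquivOfLe h1.le).symm hWT
      · exact mem_of_equiv hT (subquotEquiv π hπker q
          (by rw [Submodule.range_mkQ]; exact le_top)).symm hqT
    · exact noU_of_injective (quotComapEquiv π hπsurj q).toLinearMap
        (quotComapEquiv π hπsurj q).injective hqU
  -- the quotient is a brick
  have main : ∀ g : Module.End A (M ⧸ W), g ≠ 0 → Function.Bijective g := by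
    intro g hg
    by_contra hnb
    have hni : ¬ Function.Injective (g : (M ⧸ W) →ₗ[A] (M ⧸ W)) := fun hi =>
      hnb ⟨hi, IsArtinian.surjective_of_injective_endomorphism g hi⟩
    have kmon : Monotone fun n => LinearMap.ker (g ^ n) := by
      refine monotone_nat_of_le_succ fun n => ?_
      rw [pow_succ', Module.End.mul_eq_comp]
      exact LinearMap.ker_le_ker_comp _ _
    have rmon : ∀ {n m' : ℕ}, n ≤ m' → LinearMap.range (g ^ m') ≤ LinearMap.range (g ^ n) := by
      intro n m' hnm
      obtain ⟨c, rfl⟩ := Nat.exists_eq_add_of_le hnm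
      rw [pow_add, Module.End.mul_eq_comp]
      exact LinearMap.range_comp_le_range _ _
    obtain ⟨n₁, hn₁⟩ := monotone_stabilizes_iff_noetherian.mpr inferInstance
      ⟨fun n => LinearMap.ker (g ^ n), kmon⟩
    obtain ⟨n₂, hn₂⟩ := IsArtinian.monotone_stabilizes
      (⟨fun n => OrderDual.toDual (LinearMap.range (g ^ n)), fun n m' hnm => rmon hnm⟩ :
        ℕ →o (Submodule A (M ⧸ W))ᵒᵈ)
    set m := max (max n₁ n₂) 1 with hm
    have hm1 : 1 ≤ m := le_max_right _ _
    have hmn₁ : n₁ ≤ m := le_trans (le_max_left _ _) (le_max_left _ _)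
    have hmn₂ : n₂ ≤ m := le_trans (le_max_right _ _) (le_max_left _ _)
    have hker2 : LinearMap.ker (g ^ (m + m)) = LinearMap.ker (g ^ m) :=
      ((hn₁ m hmn₁).symm.trans (hn₁ (m + m) (le_trans hmn₁ (Nat.le_add_right _ _)))).symm
    have hrange2 : LinearMap.range (g ^ (m + m)) = LinearMap.range (g ^ m) := by
      have := ((hn₂ m hmn₂).symm.trans (hn₂ (m + m) (le_trans hmn₂ (Nat.le_add_right _ _)))).symm
      exact congrArg OrderDual.ofDual this
    by_cases hh : g ^ m = 0
    · -- nilpotent case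
      have hex : ∃ r, g ^ (r + 1) = 0 := ⟨m - 1, by rwa [Nat.sub_add_cancel hm1]⟩
      set r := Nat.find hex with hrdef
      have hr : g ^ (r + 1) = 0 := Nat.find_spec hex
      have hrpos : r ≠ 0 := by
        intro h0
        apply hg
        simpa [h0] using hr
      have hgr : g ^ r ≠ 0 := by
        intro h0
        refine Nat.find_min hex (m := r - 1) (Nat.sub_lt (Nat.pos_of_ne_zero hrpos) one_pos) ?_
        rwa [Nat.sub_add_cancel (Nat.one_le_iff_ne_zero.mpr hrpos)]
      set h : (M ⧸ W) →ₗ[A] (M ⧸ W) := g ^ r with hhdef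
      have hh2 : h.comp h = 0 := by
        have h2r : g ^ (r + r) = 0 := by
          have : r + r = (r + 1) + (r - 1) := by omega
          rw [this, pow_add, hr, zero_mul]
        rw [hhdef, ← Module.End.mul_eq_comp, ← pow_add]
        exact h2r
      have hIK : LinearMap.range h ≤ LinearMap.ker h := LinearMap.range_le_ker_iff.mpr hh2
      have hIh : LinearMap.range h ≠ ⊥ := fun e => hgr (LinearMap.range_eq_bot.mp e)
      have hKh : LinearMap.ker h ≠ ⊤ := fun e => hgr (LinearMap.ker_eq_top.mp e)
      set Ih := LinearMap.range h with hIhdef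
      set ρ := Ih.mkQ with hρdef
      have hρsurj : Function.Surjective ρ := Submodule.mkQ_surjective Ih
      have hρker : LinearMap.ker ρ = Ih := Submodule.ker_mkQ Ih
      obtain ⟨t, htU, htq⟩ := quot_max_U (M := (M ⧸ W) ⧸ Ih) hU
      set hbar := Ih.liftQ h hIK with hbardef
      have hmapbot : Submodule.map hbar t = ⊥ := by
        refine no_U_submodule hU hBU _ ?_
        exact hU.2.2.2.1 (ModuleCat.of A t) (ModuleCat.of A (Submodule.map hbar t))
          (hbar.submoduleMap t) (hbar.submoduleMap_surjective t) htU
      have htker : t ≤ LinearMap.ker hbar :=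
        Submodule.map_le_iff_le_comap.mp (le_of_eq_of_le hmapbot bot_le)
      have hkerbar : LinearMap.ker hbar = Submodule.map ρ (LinearMap.ker h) :=
        Submodule.ker_liftQ _ _ _
      set V := Submodule.comap ρ t with hVdef
      have hIV : Ih ≤ V := by
        intro x hx
        have hx0 : ρ x = 0 := by rwa [← LinearMap.mem_ker, hρker]
        simp only [hVdef, Submodule.mem_comap, hx0]
        exact t.zero_mem
      have hVK : V ≤ LinearMap.ker h := by
        have h2 : t ≤ Submodule.map ρ (LinearMap.ker h) := hkerbar ▸ htker
        calc V ≤ Submodule.comap ρ (Submodule.map ρ (LinearMap.ker h)) :=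
              Submodule.comap_mono h2
          _ = LinearMap.ker h ⊔ LinearMap.ker ρ := Submodule.comap_map_eq ρ _
          _ = LinearMap.ker h := by rw [hρker]; exact sup_eq_left.mpr hIK
      refine key V ?_ ?_ ?_ ?_
      · exact fun e => hIh (le_bot_iff.mp (e ▸ hIV))
      · exact fun e => hKh (top_unique (e ▸ hVK))
      · refine hT.2.2.2.2 (ModuleCat.of A V) (Submodule.comap V.subtype Ih) ?_ ?_
        · exact mem_of_equiv hT (Submodule.comapSubtypeEquivOfLe hIV).symm
            (image_mem hT h hBT)
        · exact mem_of_equiv hT (subquotEquiv ρ hρker t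
            (by rw [Submodule.range_mkQ]; exact le_top)).symm (hUT htU)
      · exact noU_of_injective (quotComapEquiv ρ hρsurj t).toLinearMap
          (quotComapEquiv ρ hρsurj t).injective htq
    · -- non-nilpotent case : Fitting
      set h : (M ⧸ W) →ₗ[A] (M ⧸ W) := g ^ m with hhdef
      have hdis : Disjoint (LinearMap.range h) (LinearMap.ker h) := by
        rw [disjoint_iff, eq_bot_iff]
        intro x hx
        obtain ⟨hxr, hxk⟩ := Submodule.mem_inf.mp hx
        obtain ⟨y, rfl⟩ := hxr
        have hy : y ∈ LinearMap.ker (g ^ (m + m)) := by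
          rw [LinearMap.mem_ker, pow_add, Module.End.mul_apply]
          exact hxk
        rw [hker2] at hy
        simpa using hy
      have hcod : Codisjoint (LinearMap.range h) (LinearMap.ker h) := by
        rw [codisjoint_iff, eq_top_iff]
        intro x _
        have hx : h x ∈ LinearMap.range (g ^ (m + m)) := by
          rw [hrange2]
          exact ⟨x, rfl⟩
        obtain ⟨y, hy⟩ := hx
        have hx1 : x - h y ∈ LinearMap.ker h := by
          rw [LinearMap.mem_ker, map_sub]
          have : h (h y) = h x := by
            rw [hhdef, ← Module.End.mul_apply, ← pow_add]
            exact hy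
          rw [this, sub_self]
        exact Submodule.mem_sup.mpr ⟨h y, ⟨y, rfl⟩, x - h y, hx1, by abel⟩
      have hcompl : IsCompl (LinearMap.range h) (LinearMap.ker h) := ⟨hdis, hcod⟩
      have hquotT : ModuleCat.of A ((M ⧸ W) ⧸ LinearMap.range h) ∈ T :=
        hT.2.2.2.1 (ModuleCat.of A (M ⧸ W)) (ModuleCat.of A ((M ⧸ W) ⧸ LinearMap.range h))
          (LinearMap.range h).mkQ (Submodule.mkQ_surjective _) hBT
      have hkerT : ModuleCat.of A (LinearMap.ker h) ∈ T :=
        mem_of_equiv hT (Submodule.quotientEquivOfIsCompl _ _ hcompl) hquotT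
      refine key (LinearMap.ker h) ?_ ?_ hkerT ?_
      · intro e
        apply hni
        rw [← LinearMap.ker_eq_bot]
        have h1 : LinearMap.ker (g ^ 1) ≤ LinearMap.ker (g ^ m) := kmon hm1
        rw [pow_one] at h1
        exact le_bot_iff.mp (e ▸ h1)
      · exact fun e => hh (LinearMap.ker_eq_top.mp e)
      · refine noU_of_injective (h.quotKerEquivRange).toLinearMap
          (h.quotKerEquivRange).injective ?_
        exact noU_of_injective (LinearMap.range h).subtype (Submodule.injective_subtype _) hBU
  exact ⟨W, hWtop, hWT, ⟨hBnt, hT.1 _ hBT, main⟩, hBT, hWU⟩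

end Step2


section Rec
variable {A : Type u} [Ring A] {T U : Set (ModuleCat.{u} A)}

lemma chain_lemma (hT : IsTorsionClass A T) (hU : IsTorsionClass A U) (hUT : U ⊆ T)
    (X : ModuleCat.{u} A) [IsArtinian A X] [IsNoetherian A X] :
    ∀ Z : Submodule A X, ModuleCat.of A Z ∈ T → NoU U Z →
      ∃ (n : ℕ) (c : Fin (n + 1) → Submodule A X),
        Monotone c ∧ c 0 = ⊥ ∧ c (Fin.last n) = Z ∧
        ∀ i : Fin n,
          IsBrick A (ModuleCat.of A
            (c i.succ ⧸ Submodule.comap (c i.succ).subtype (c i.castSucc))) ∧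
          ModuleCat.of A
            (c i.succ ⧸ Submodule.comap (c i.succ).subtype (c i.castSucc)) ∈ T ∧
          NoU U (c i.succ ⧸ Submodule.comap (c i.succ).subtype (c i.castSucc)) := by
  intro Z
  induction Z using WellFoundedLT.induction with
  | _ Z IH =>
  intro hZT hZU
  rcases eq_or_ne Z ⊥ with rfl | hZbot
  · exact ⟨0, fun _ => ⊥, monotone_const, rfl, rfl, fun i => i.elim0⟩
  · haveI : Nontrivial Z := Submodule.nontrivial_iff_ne_bot.mpr hZbot
    obtain ⟨W, hWtop, hWT, hbrick, hqT, hqU⟩ := exists_brick_quot hT hU hUT ↥Z hZT hZU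
    set Z' := Submodule.map Z.subtype W with hZ'def
    have hZ'le : Z' ≤ Z := Submodule.map_subtype_le Z W
    have hcm : Submodule.comap Z.subtype Z' = W :=
      Submodule.comap_map_eq_of_injective (Submodule.injective_subtype Z) W
    have hZ'lt : Z' < Z := by
      refine lt_of_le_of_ne hZ'le fun he => hWtop ?_
      rw [← hcm, he, Submodule.comap_subtype_self]
    have hZ'T : ModuleCat.of A Z' ∈ T :=
      mem_of_equiv hT
        (Submodule.equivMapOfInjective Z.subtype (Submodule.injective_subtype Z) W) hWT
    have hZ'U : NoU U Z' :=
      noU_of_injective (Submodule.inclusion hZ'le) (Submodule.inclusion_injective hZ'le) hZU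
    obtain ⟨n, d, hmono, hd0, hdlast, hdcond⟩ := IH Z' hZ'lt hZ'T hZ'U
    refine ⟨n + 1, Fin.snoc d Z, ?_, ?_, ?_, ?_⟩
    · intro i j hij
      rcases Fin.eq_castSucc_or_eq_last j with ⟨j', rfl⟩ | rfl
      · rcases Fin.eq_castSucc_or_eq_last i with ⟨i', rfl⟩ | rfl
        · rw [Fin.snoc_castSucc, Fin.snoc_castSucc]
          exact hmono (Fin.castSucc_le_castSucc_iff.mp hij)
        · exact absurd (lt_of_le_of_lt hij (Fin.castSucc_lt_last j')) (lt_irrefl _)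
      · rw [Fin.snoc_last]
        rcases Fin.eq_castSucc_or_eq_last i with ⟨i', rfl⟩ | rfl
        · rw [Fin.snoc_castSucc]
          exact le_trans (le_trans (hmono (Fin.le_last i')) (le_of_eq hdlast)) hZ'le
        · rw [Fin.snoc_last]
    · rw [show (0 : Fin (n + 2)) = Fin.castSucc 0 by simp, Fin.snoc_castSucc]
      exact hd0
    · exact Fin.snoc_last _ _
    · intro i
      rcases Fin.eq_castSucc_or_eq_last i with ⟨i', rfl⟩ | rfl
      · have e1 : (Fin.castSucc i').succ = Fin.castSucc i'.succ := Fin.succ_castSucc i'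
        have e2 : (Fin.castSucc i').castSucc = Fin.castSucc i'.castSucc := rfl
        rw [e1, e2, Fin.snoc_castSucc, Fin.snoc_castSucc]
        exact hdcond i'
      · have e1 : (Fin.last n).succ = Fin.last (n + 1) := Fin.succ_last n
        rw [e1, Fin.snoc_last, Fin.snoc_castSucc, hdlast, hcm]
        exact ⟨hbrick, hqT, hqU⟩

end Rec


/-- For torsion classes `U ⊆ T`, every module `X ∈ T` with `Hom_A(U', X) = 0` for all
`U' ∈ U` admits a finite chain of submodules `0 = X₀ ⊆ ⋯ ⊆ Xₙ = X` whose subquotients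
are bricks lying in `T` and receiving no nonzero homomorphism from `U`. -/
theorem tors_inter_perp_filtered_by_bricks (k A : Type u) [Field k] [Ring A] [Algebra k A]
    [FiniteDimensional k A]
    (T U : Set (ModuleCat.{u} A)) (hT : IsTorsionClass A T) (hU : IsTorsionClass A U)
    (hUT : U ⊆ T) :
    ∀ X : ModuleCat.{u} A, X ∈ T → (∀ U' ∈ U, ∀ f : U' →ₗ[A] X, f = 0) →
      ∃ (n : ℕ) (c : Fin (n + 1) → Submodule A X),
        Monotone c ∧ c 0 = ⊥ ∧ c (Fin.last n) = ⊤ ∧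
        ∀ i : Fin n,
          IsBrick A (ModuleCat.of A
            (c i.succ ⧸ Submodule.comap (c i.succ).subtype (c i.castSucc))) ∧
          ModuleCat.of A
            (c i.succ ⧸ Submodule.comap (c i.succ).subtype (c i.castSucc)) ∈ T ∧
          ∀ U' ∈ U,
            ∀ f : U' →ₗ[A]
              (c i.succ ⧸ Submodule.comap (c i.succ).subtype (c i.castSucc)), f = 0 := by
  intro X hXT hXU
  haveI : IsArtinianRing A := IsArtinianRing.of_finite k A
  haveI : IsNoetherianRing A := isNoetherian_of_tower k inferInstance
  haveI : Module.Finite A X := hT.1 X hXT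
  haveI : IsArtinian A X := inferInstance
  haveI : IsNoetherian A X := inferInstance
  have hT' : ModuleCat.of A (⊤ : Submodule A X) ∈ T :=
    mem_of_equiv hT (Submodule.topEquiv (R := A) (M := X)).symm hXT
  have hU' : NoU U (⊤ : Submodule A X) :=
    noU_of_injective (Submodule.topEquiv (R := A) (M := X)).toLinearMap
      (Submodule.topEquiv).injective hXU
  obtain ⟨n, c, h1, h2, h3, h4⟩ := chain_lemma hT hU hUT X ⊤ hT' hU'
  exact ⟨n, c, h1, h2, h3, fun i => ⟨(h4 i).1, (h4 i).2.1, (h4 i).2.2⟩⟩
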